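/- Let r(z) = Π_{k=1}^{M₁} ((z + conj(λ_k)⁻¹)(z + λ_k⁻¹))/((z − λ_k⁻¹)(z − conj(λ_k)⁻¹)) · Π_{k'=1}^{M₂} (z + μ_{k'}⁻¹)/(z − μ_{k'}⁻¹), where λ_k ∈ ℂ \ ℝ and μ_{k'} ∈ ℝ all have positive real part and are nonzero. Then |r(iy)| = 1 for all y ∈ ℝ, and |r(z)| ≤ 1 for all z with Re(z) ≤ 0. -/

import Mathlib

open Complex

lemma aux_ne (z w : ℂ) (hz : z.re ≤ 0) (hw : 0 < w.re) :
    z - (starRingEnd ℂ) w ≠ 0 := by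
  intro h
  have h2 := congrArg Complex.re h
  simp [Complex.sub_re, Complex.conj_re] at h2
  linarith

lemma aux_le (z w : ℂ) (hz : z.re ≤ 0) (hw : 0 < w.re) :
    ‖z + w‖ ≤ ‖z - (starRingEnd ℂ) w‖ := by
  rw [Complex.norm_def, Complex.norm_def]
  apply Real.sqrt_le_sqrt
  simp only [Complex.normSq_apply, Complex.add_re, Complex.add_im,
    Complex.sub_re, Complex.sub_im, Complex.conj_re, Complex.conj_im]
  nlinarith

lemma aux_eq (z w : ℂ) (hz : z.re = 0) :
    ‖z + w‖ = ‖z - (starRingEnd ℂ) w‖ := by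
  rw [Complex.norm_def, Complex.norm_def]
  congr 1
  simp only [Complex.normSq_apply, Complex.add_re, Complex.add_im,
    Complex.sub_re, Complex.sub_im, Complex.conj_re, Complex.conj_im, hz]
  ring

lemma inv_re_pos (w : ℂ) (hw : 0 < w.re) : 0 < (w⁻¹).re := by
  have hw0 : w ≠ 0 := fun h => by simp [h] at hw
  rw [Complex.inv_re]
  exact div_pos hw (Complex.normSq_pos.2 hw0)

lemma conj_re_pos (w : ℂ) (hw : 0 < w.re) : 0 < ((starRingEnd ℂ) w).re := by
  simpa using hw

lemma pair_le (z w : ℂ) (hz : z.re ≤ 0) (hw : 0 < w.re) :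
    ‖(z + (starRingEnd ℂ) w) * (z + w) /
      ((z - w) * (z - (starRingEnd ℂ) w))‖ ≤ 1 := by
  have hcw : 0 < ((starRingEnd ℂ) w).re := conj_re_pos w hw
  have hne1 : z - w ≠ 0 := by
    have := aux_ne z ((starRingEnd ℂ) w) hz hcw
    simpa using this
  have hne2 : z - (starRingEnd ℂ) w ≠ 0 := aux_ne z w hz hw
  rw [norm_div, norm_mul, norm_mul]
  rw [div_le_one (mul_pos (norm_pos_iff.mpr hne1) (norm_pos_iff.mpr hne2))]
  have h1 : ‖z + (starRingEnd ℂ) w‖ ≤ ‖z - w‖ := by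
    have := aux_le z ((starRingEnd ℂ) w) hz hcw
    simpa using this
  have h2 : ‖z + w‖ ≤ ‖z - (starRingEnd ℂ) w‖ :=
    aux_le z w hz hw
  have := mul_le_mul h1 h2 (norm_nonneg _) (norm_nonneg _)
  simpa [mul_comm] using this

lemma pair_eq (z w : ℂ) (hz : z.re = 0) (hw : 0 < w.re) :
    ‖(z + (starRingEnd ℂ) w) * (z + w) /
      ((z - w) * (z - (starRingEnd ℂ) w))‖ = 1 := by
  have hcw : 0 < ((starRingEnd ℂ) w).re := conj_re_pos w hw
  have hne1 : z - w ≠ 0 := by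
    have := aux_ne z ((starRingEnd ℂ) w) hz.le hcw
    simpa using this
  have hne2 : z - (starRingEnd ℂ) w ≠ 0 := aux_ne z w hz.le hw
  rw [norm_div, norm_mul, norm_mul]
  have h1 : ‖z + (starRingEnd ℂ) w‖ = ‖z - w‖ := by
    have := aux_eq z ((starRingEnd ℂ) w) hz
    simpa using this
  have h2 : ‖z + w‖ = ‖z - (starRingEnd ℂ) w‖ :=
    aux_eq z w hz
  rw [h1, h2]
  exact div_self (mul_pos (norm_pos_iff.mpr hne1) (norm_pos_iff.mpr hne2)).ne'

lemma single_le (z : ℂ) (m : ℝ) (hz : z.re ≤ 0) (hm : 0 < m) :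
    ‖(z + ((m : ℂ))⁻¹) / (z - ((m : ℂ))⁻¹)‖ ≤ 1 := by
  have hw : 0 < (((m : ℂ))⁻¹).re := inv_re_pos _ (by simpa using hm)
  have hconj : (starRingEnd ℂ) ((m : ℂ))⁻¹ = ((m : ℂ))⁻¹ := by
    rw [map_inv₀, Complex.conj_ofReal]
  have hne : z - ((m : ℂ))⁻¹ ≠ 0 := by
    have := aux_ne z ((m : ℂ))⁻¹ hz hw
    rwa [hconj] at this
  rw [norm_div, div_le_one (norm_pos_iff.mpr hne)]
  have := aux_le z ((m : ℂ))⁻¹ hz hw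
  rwa [hconj] at this

lemma single_eq (z : ℂ) (m : ℝ) (hz : z.re = 0) (hm : 0 < m) :
    ‖(z + ((m : ℂ))⁻¹) / (z - ((m : ℂ))⁻¹)‖ = 1 := by
  have hw : 0 < (((m : ℂ))⁻¹).re := inv_re_pos _ (by simpa using hm)
  have hconj : (starRingEnd ℂ) ((m : ℂ))⁻¹ = ((m : ℂ))⁻¹ := by
    rw [map_inv₀, Complex.conj_ofReal]
  have hne : z - ((m : ℂ))⁻¹ ≠ 0 := by
    have := aux_ne z ((m : ℂ))⁻¹ hz.le hw
    rwa [hconj] at this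
  rw [norm_div, div_eq_one_iff_eq (norm_pos_iff.mpr hne).ne']
  have := aux_eq z ((m : ℂ))⁻¹ hz
  rwa [hconj] at this

theorem stmt_13 (M₁ M₂ : ℕ) (lam : Fin M₁ → ℂ) (μ : Fin M₂ → ℝ)
    (hlam_re : ∀ k, 0 < (lam k).re) (hlam_im : ∀ k, (lam k).im ≠ 0)
    (hμ : ∀ k', 0 < μ k')
    (r : ℂ → ℂ)
    (hr : ∀ z, r z =
      (∏ k, ((z + (starRingEnd ℂ (lam k))⁻¹) * (z + (lam k)⁻¹)) /
        ((z - (lam k)⁻¹) * (z - (starRingEnd ℂ (lam k))⁻¹))) *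
      ∏ k', (z + ((μ k' : ℂ))⁻¹) / (z - ((μ k' : ℂ))⁻¹)) :
    (∀ y : ℝ, ‖r (Complex.I * y)‖ = 1)
    ∧ ∀ z : ℂ, z.re ≤ 0 → ‖r z‖ ≤ 1 := by
  have hinv : ∀ k, 0 < ((lam k)⁻¹).re := fun k => inv_re_pos _ (hlam_re k)
  have hconj : ∀ k, (starRingEnd ℂ (lam k))⁻¹ = (starRingEnd ℂ) ((lam k)⁻¹) :=
    fun k => (map_inv₀ _ _).symm
  constructor
  · intro y
    set z := Complex.I * (y : ℂ) with hzdef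
    have hzre : z.re = 0 := by simp [hzdef]
    rw [hr, norm_mul, norm_prod, norm_prod]
    rw [Finset.prod_eq_one, Finset.prod_eq_one, one_mul]
    · intro k' _
      exact single_eq z (μ k') hzre (hμ k')
    · intro k _
      rw [hconj k]
      exact pair_eq z ((lam k)⁻¹) hzre (hinv k)
  · intro z hz
    rw [hr, norm_mul, norm_prod, norm_prod]
    have h1 : (∏ k, ‖((z + (starRingEnd ℂ (lam k))⁻¹) * (z + (lam k)⁻¹)) /
        ((z - (lam k)⁻¹) * (z - (starRingEnd ℂ (lam k))⁻¹))‖) ≤ 1 := by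
      apply Finset.prod_le_one
      · intro k _; exact norm_nonneg _
      · intro k _
        rw [hconj k]
        exact pair_le z ((lam k)⁻¹) hz (hinv k)
    have h2 : (∏ k', ‖(z + ((μ k' : ℂ))⁻¹) / (z - ((μ k' : ℂ))⁻¹)‖) ≤ 1 := by
      apply Finset.prod_le_one
      · intro k' _; exact norm_nonneg _
      · intro k' _; exact single_le z (μ k') hz (hμ k')
    exact mul_le_one₀ h1 (Finset.prod_nonneg fun _ _ => norm_nonneg _) h2
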